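/- For any rational number of the form 2^a/3^b with a ≥ b·log₂(3) (so 2^a ≥ 3^b) and integers a > u_1 > ... > u_b = 0, the quantity 2^a/3^b - Σ_{i=1}^{b} 2^{u_i}/3^{b-i+1} is a positive integer if and only if 2^a ≡ Σ_{i=1}^{b-1} 2^{u_i}·3^{i-1} + 3^{b-1} (mod 3^b). -/

import Mathlib

open Finset

private lemma coprime23' (m k : ℕ) : IsCoprime ((2:ℤ)^m) ((3:ℤ)^k) := by
  apply IsCoprime.pow
  rw [Int.isCoprime_iff_gcd_eq_one]
  decide

theorem stmt1 (b a : ℕ) (hb : 1 ≤ b) (u : ℕ → ℕ) (hu0 : u 0 = a) (hub : u b = 0)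
    (hdec : ∀ i, i < b → u (i + 1) < u i) (hab : 3 ^ b ≤ 2 ^ a) :
    (∃ n : ℕ, 0 < n ∧
        (n : ℚ) = 2 ^ a / 3 ^ b - ∑ i ∈ Finset.Icc 1 b, (2 : ℚ) ^ (u i) / 3 ^ (b - i + 1)) ↔
      2 ^ a ≡ (∑ i ∈ Finset.Icc 1 (b - 1), 2 ^ (u i) * 3 ^ (i - 1)) + 3 ^ (b - 1) [MOD 3 ^ b] := by
  obtain ⟨c, rfl⟩ : ∃ c, b = c + 1 := ⟨b - 1, by omega⟩
  simp only [Nat.add_sub_cancel]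
  -- monotonicity facts
  have hmon : ∀ j, j ≤ c + 1 → ∀ i, i ≤ j → u j ≤ u i := by
    intro j
    induction j with
    | zero =>
      intro _ i hi
      obtain rfl : i = 0 := by omega
      exact le_rfl
    | succ k ih =>
      intro hj i hi
      rcases Nat.eq_or_lt_of_le hi with h | h
      · subst h; exact le_rfl
      · exact le_trans (le_of_lt (hdec k (by omega))) (ih (by omega) i (by omega))
  have hstrict : ∀ i j, i < j → j ≤ c + 1 → u j < u i := by
    intro i j hij hj
    exact lt_of_le_of_lt (hmon j hj (i + 1) hij) (hdec i (by omega))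
  have ha : 1 ≤ a := by
    have := hstrict 0 (c + 1) (by omega) le_rfl
    omega
  have hua : ∀ i, 1 ≤ i → i ≤ c + 1 → u i < a := by
    intro i h1 h2
    have := hstrict 0 i h1 h2
    omega
  -- divisibility of partial remainders by powers of 2
  have hD2 : ∀ i, 1 ≤ i → i ≤ c + 1 →
      (2:ℤ) ^ (u i) ∣ 2 ^ a - ∑ j ∈ Icc 1 i, (2:ℤ) ^ (u j) * 3 ^ (j - 1) := by
    intro i h1 h2
    apply dvd_sub
    · exact pow_dvd_pow 2 (le_of_lt (hua i h1 h2))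
    · apply Finset.dvd_sum
      intro j hj
      simp only [mem_Icc] at hj
      exact Dvd.dvd.mul_right (pow_dvd_pow 2 (hmon i h2 j hj.2)) _
  -- key positivity: the congruence forces positivity
  have hkey : (3:ℤ) ^ (c + 1) ∣ 2 ^ a - ∑ j ∈ Icc 1 (c + 1), (2:ℤ) ^ (u j) * 3 ^ (j - 1) →
      0 < 2 ^ a - ∑ j ∈ Icc 1 (c + 1), (2:ℤ) ^ (u j) * 3 ^ (j - 1) := by
    intro hdvd
    have hD3 : ∀ i, i ≤ c + 1 →
        (3:ℤ) ^ i ∣ 2 ^ a - ∑ j ∈ Icc 1 i, (2:ℤ) ^ (u j) * 3 ^ (j - 1) := by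
      intro i hi
      have hdisj : Disjoint (Icc 1 i) (Ioc i (c + 1)) := by
        simp only [Finset.disjoint_left, mem_Icc, mem_Ioc]
        omega
      have hsplit : (∑ j ∈ Icc 1 i, (2:ℤ) ^ (u j) * 3 ^ (j - 1))
          + ∑ j ∈ Ioc i (c + 1), (2:ℤ) ^ (u j) * 3 ^ (j - 1)
          = ∑ j ∈ Icc 1 (c + 1), (2:ℤ) ^ (u j) * 3 ^ (j - 1) := by
        rw [← Finset.sum_union hdisj]
        congr 1
        ext x
        simp only [mem_union, mem_Icc, mem_Ioc]
        omega
      have h1 : (3:ℤ) ^ i ∣ ∑ j ∈ Ioc i (c + 1), (2:ℤ) ^ (u j) * 3 ^ (j - 1) := by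
        apply Finset.dvd_sum
        intro j hj
        simp only [mem_Ioc] at hj
        exact Dvd.dvd.mul_left (pow_dvd_pow 3 (by omega)) _
      have h2 : (3:ℤ) ^ i ∣ 2 ^ a - ∑ j ∈ Icc 1 (c + 1), (2:ℤ) ^ (u j) * 3 ^ (j - 1) :=
        dvd_trans (pow_dvd_pow 3 hi) hdvd
      have heq : (2:ℤ) ^ a - ∑ j ∈ Icc 1 i, (2:ℤ) ^ (u j) * 3 ^ (j - 1)
          = (2 ^ a - ∑ j ∈ Icc 1 (c + 1), (2:ℤ) ^ (u j) * 3 ^ (j - 1))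
            + ∑ j ∈ Ioc i (c + 1), (2:ℤ) ^ (u j) * 3 ^ (j - 1) := by
        rw [← hsplit]; ring
      rw [heq]
      exact dvd_add h2 h1
    -- a single downward step preserves negativity
    have hstep : ∀ i, 1 ≤ i → i ≤ c + 1 →
        2 ^ a - ∑ j ∈ Icc 1 i, (2:ℤ) ^ (u j) * 3 ^ (j - 1) < 0 →
        2 ^ a - ∑ j ∈ Icc 1 (i - 1), (2:ℤ) ^ (u j) * 3 ^ (j - 1) < 0 := by
      intro i h1 h2 hneg
      obtain ⟨d, rfl⟩ : ∃ d, i = d + 1 := ⟨i - 1, by omega⟩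
      simp only [Nat.add_sub_cancel] at *
      have hsum : ∑ j ∈ Icc 1 (d + 1), (2:ℤ) ^ (u j) * 3 ^ (j - 1)
          = (∑ j ∈ Icc 1 d, (2:ℤ) ^ (u j) * 3 ^ (j - 1)) + 2 ^ (u (d + 1)) * 3 ^ d := by
        rw [Finset.sum_Icc_succ_top (by omega)]
        norm_num
      have hdvdP : (2:ℤ) ^ (u (d + 1)) * 3 ^ (d + 1)
          ∣ 2 ^ a - ∑ j ∈ Icc 1 (d + 1), (2:ℤ) ^ (u j) * 3 ^ (j - 1) :=
        (coprime23' _ _).mul_dvd (hD2 _ h1 h2) (hD3 _ h2)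
      have hle : (2:ℤ) ^ (u (d + 1)) * 3 ^ (d + 1)
          ≤ -(2 ^ a - ∑ j ∈ Icc 1 (d + 1), (2:ℤ) ^ (u j) * 3 ^ (j - 1)) :=
        Int.le_of_dvd (by linarith) (dvd_neg.mpr hdvdP)
      have hpos : (0:ℤ) < 2 ^ (u (d + 1)) * 3 ^ d := by positivity
      have h3 : (2:ℤ) ^ (u (d + 1)) * 3 ^ (d + 1) = 3 * (2 ^ (u (d + 1)) * 3 ^ d) := by ring
      rw [hsum] at hle
      linarith
    -- downward induction
    rcases lt_trichotomy ((2:ℤ) ^ a - ∑ j ∈ Icc 1 (c + 1), (2:ℤ) ^ (u j) * 3 ^ (j - 1)) 0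
      with hneg | hzero | hpos
    · exfalso
      have hall : ∀ k, k ≤ c + 1 →
          2 ^ a - ∑ j ∈ Icc 1 (c + 1 - k), (2:ℤ) ^ (u j) * 3 ^ (j - 1) < 0 := by
        intro k
        induction k with
        | zero => intro _; simpa using hneg
        | succ k ih =>
          intro hk
          have h := ih (by omega)
          have h' := hstep (c + 1 - k) (by omega) (by omega) h
          have heq : c + 1 - (k + 1) = c + 1 - k - 1 := by omega
          rw [heq]
          exact h'
      have hfinal := hall (c + 1) le_rfl
      simp only [Nat.sub_self] at hfinal
      rw [show Icc 1 0 = (∅ : Finset ℕ) by rfl] at hfinal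
      simp only [Finset.sum_empty, sub_zero] at hfinal
      have : (0:ℤ) < 2 ^ a := by positivity
      linarith
    · exfalso
      -- parity contradiction
      have hodd : Odd (∑ j ∈ Icc 1 (c + 1), (2:ℤ) ^ (u j) * 3 ^ (j - 1)) := by
        rw [Finset.sum_Icc_succ_top (by omega : 1 ≤ c + 1)]
        apply Even.add_odd
        · apply Finset.even_sum
          intro j hj
          simp only [mem_Icc] at hj
          have : 1 ≤ u j := by
            have := hstrict j (c + 1) (by omega) le_rfl
            omega
          obtain ⟨e, he⟩ : ∃ e, u j = e + 1 := ⟨u j - 1, by omega⟩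
          rw [he, pow_succ]
          exact ⟨2 ^ e * 3 ^ (j - 1), by ring⟩
        · rw [hub]
          simp only [pow_zero, one_mul, Nat.add_sub_cancel]
          exact Odd.pow ⟨1, by ring⟩
      have heven : Even ((2:ℤ) ^ a) := by
        obtain ⟨e, he⟩ : ∃ e, a = e + 1 := ⟨a - 1, by omega⟩
        rw [he, pow_succ]
        exact ⟨2 ^ e, by ring⟩
      have : (2:ℤ) ^ a = ∑ j ∈ Icc 1 (c + 1), (2:ℤ) ^ (u j) * 3 ^ (j - 1) := by linarith
      rw [this] at heven
      exact ((Int.not_odd_iff_even.mpr heven)) hodd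
    · exact hpos
  -- rewrite the rational sum with common denominator
  have hS : ∑ i ∈ Icc 1 (c + 1), (2:ℚ) ^ (u i) / 3 ^ (c + 1 - i + 1)
      = (∑ j ∈ Icc 1 (c + 1), (2:ℚ) ^ (u j) * 3 ^ (j - 1)) / 3 ^ (c + 1) := by
    rw [Finset.sum_div]
    apply Finset.sum_congr rfl
    intro i hi
    simp only [mem_Icc] at hi
    rw [div_eq_div_iff (by positivity) (by positivity), mul_assoc, ← pow_add]
    congr 2
    omega
  have hTQ : ((∑ j ∈ Icc 1 (c + 1), (2:ℤ) ^ (u j) * 3 ^ (j - 1) : ℤ) : ℚ)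
      = ∑ j ∈ Icc 1 (c + 1), (2:ℚ) ^ (u j) * 3 ^ (j - 1) := by
    push_cast
    rfl
  -- the ModEq condition as an integer divisibility
  have hmod : (2 ^ a ≡ (∑ i ∈ Icc 1 c, 2 ^ (u i) * 3 ^ (i - 1)) + 3 ^ c [MOD 3 ^ (c + 1)]) ↔
      (3:ℤ) ^ (c + 1) ∣ 2 ^ a - ∑ j ∈ Icc 1 (c + 1), (2:ℤ) ^ (u j) * 3 ^ (j - 1) := by
    rw [Nat.modEq_iff_dvd]
    have hcast : (((∑ i ∈ Icc 1 c, 2 ^ (u i) * 3 ^ (i - 1)) + 3 ^ c : ℕ) : ℤ)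
        = ∑ j ∈ Icc 1 (c + 1), (2:ℤ) ^ (u j) * 3 ^ (j - 1) := by
      rw [Finset.sum_Icc_succ_top (by omega : 1 ≤ c + 1), hub]
      push_cast
      norm_num
    rw [hcast]
    push_cast
    rw [dvd_sub_comm]
  rw [hmod, hS]
  have h3 : ((3:ℚ) ^ (c + 1)) ≠ 0 := by positivity
  constructor
  · rintro ⟨n, hn0, hn⟩
    rw [← hTQ, ← sub_div, eq_comm, div_eq_iff h3] at hn
    have hz : (2:ℤ) ^ a - ∑ j ∈ Icc 1 (c + 1), (2:ℤ) ^ (u j) * 3 ^ (j - 1)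
        = (n : ℤ) * 3 ^ (c + 1) := by exact_mod_cast hn
    exact ⟨n, by linarith⟩
  · intro hdvd
    have hpos := hkey hdvd
    obtain ⟨m, hm⟩ := hdvd
    have hm0 : 0 < m := by
      rcases le_or_gt m 0 with h | h
      · exfalso
        have h3' : (0:ℤ) < 3 ^ (c + 1) := by positivity
        nlinarith
      · exact h
    refine ⟨m.toNat, by omega, ?_⟩
    rw [← hTQ, ← sub_div]
    have hmQ : (2:ℚ) ^ a - ((∑ j ∈ Icc 1 (c + 1), (2:ℤ) ^ (u j) * 3 ^ (j - 1) : ℤ) : ℚ)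
        = 3 ^ (c + 1) * m := by exact_mod_cast hm
    have htn : ((m.toNat : ℕ) : ℚ) = (m : ℚ) := by exact_mod_cast Int.toNat_of_nonneg hm0.le
    rw [hmQ, htn, mul_comm, mul_div_assoc, div_self h3, mul_one]
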